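/- Given a non-decreasing sequence of ideals Ω_0 ⊆ Ω_1 ⊆ Ω_2 ⊆ ⋯ of k, the k-submodule I = ⊕_{i ≥ 0} Ω_i a_i of Ш_k(k) is a Rota-Baxter ideal (i.e., an ideal of the ring Ш_k(k) satisfying P(I) ⊆ I). -/

import Mathlib

open Finsupp

/-- The basis element `a_m` of the free Rota-Baxter algebra `Ш_k(k)`. -/
noncomputable def aElt {k : Type*} [CommRing k] (m : ℕ) : ℕ →₀ k := Finsupp.single m 1

/-- The product `⋄` of weight `l` on `Ш_k(k)`, defined on basis elements by
`a_m ⋄ a_n = Σ_{i=0}^{min(m,n)} C(m+n−i,m) C(m,i) l^i a_{m+n−i}` and extended bilinearly. -/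
noncomputable def diamond {k : Type*} [CommRing k] (l : k) (f g : ℕ →₀ k) : ℕ →₀ k :=
  f.sum fun m cm => g.sum fun n cn =>
    ∑ i ∈ Finset.range (min m n + 1),
      Finsupp.single (m + n - i) (cm * cn * ((m + n - i).choose m : k) * ((m.choose i : k)) * l ^ i)

/-- The Rota-Baxter operator `P (a_m) = a_{m+1}` on `Ш_k(k)`. -/
noncomputable def RBop {k : Type*} [CommRing k] (f : ℕ →₀ k) : ℕ →₀ k :=
  Finsupp.mapDomain (· + 1) f

/-- A Rota-Baxter ideal of `Ш_k(k)` of weight `l`: a `k`-submodule that is an ideal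
for `⋄` and closed under `P`. -/
def IsRBIdeal {k : Type*} [CommRing k] (l : k) (I : Submodule k (ℕ →₀ k)) : Prop :=
  (∀ f g : ℕ →₀ k, g ∈ I → diamond l f g ∈ I) ∧ (∀ f ∈ I, RBop f ∈ I)

/-- The Rota-Baxter ideal of `Ш_k(k)` generated by a set `S`. -/
noncomputable def RBspan {k : Type*} [CommRing k] (l : k) (S : Set (ℕ →₀ k)) :
    Submodule k (ℕ →₀ k) :=
  sInf {J : Submodule k (ℕ →₀ k) | IsRBIdeal l J ∧ S ⊆ J}

/-- The coefficient ideal `Ω_j(I)`: coefficients at `a_j` of elements of `I`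
supported in degrees `≤ j`. -/
def Omega {k : Type*} [CommRing k] (I : Set (ℕ →₀ k)) (j : ℕ) : Set k :=
  {b | ∃ f ∈ I, (∀ i, j < i → f i = 0) ∧ f j = b}

/-- The set of initial terms of nonzero elements of `I`. -/
def initialSet {k : Type*} [CommRing k] (I : Set (ℕ →₀ k)) : Set (ℕ →₀ k) :=
  {g | ∃ f ∈ I, ∃ n : ℕ, (∀ i, n < i → f i = 0) ∧ f n ≠ 0 ∧ g = Finsupp.single n (f n)}


/-- Given a non-decreasing sequence of ideals `Ω_0 ⊆ Ω_1 ⊆ ⋯` of `k`, the subset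
`⊕_{i ≥ 0} Ω_i a_i` of `Ш_k(k)` is a Rota-Baxter ideal. -/
theorem dirsum_is_rb_ideal {k : Type*} [CommRing k] (l : k) (W : ℕ → Ideal k)
    (hmono : Monotone W) :
    ∃ J : Submodule k (ℕ →₀ k),
      ((J : Set (ℕ →₀ k)) = {f : ℕ →₀ k | ∀ i : ℕ, f i ∈ W i}) ∧ IsRBIdeal l J := by
  refine ⟨{ carrier := {f : ℕ →₀ k | ∀ i : ℕ, f i ∈ W i}
            add_mem' := fun {f g} hf hg i => by
              simp only [Finsupp.coe_add, Pi.add_apply]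
              exact add_mem (hf i) (hg i)
            zero_mem' := fun i => by simp
            smul_mem' := fun c f hf i => by
              simp only [Finsupp.coe_smul, Pi.smul_apply, smul_eq_mul]
              exact Ideal.mul_mem_left _ _ (hf i) }, rfl, ?_, ?_⟩
  · intro f g hg p
    show (diamond l f g) p ∈ W p
    rw [diamond, Finsupp.sum_apply]
    rw [Finsupp.sum]; refine Submodule.sum_mem _ fun m hm => ?_
    rw [Finsupp.sum_apply]
    rw [Finsupp.sum]; refine Submodule.sum_mem _ fun n hn => ?_
    rw [Finset.sum_apply']
    refine Submodule.sum_mem _ fun i hi => ?_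
    rcases eq_or_ne (m + n - i) p with h | h
    · rw [h, Finsupp.single_eq_same]
      subst h
      have hi' : i ≤ min m n := Nat.lt_succ_iff.mp (Finset.mem_range.mp hi)
      have hn' : n ≤ m + n - i := by omega
      have : g n ∈ W (m + n - i) := hmono hn' (hg n)
      have : f m * g n ∈ W (m + n - i) := Ideal.mul_mem_left _ _ this
      exact Ideal.mul_mem_right _ _ (Ideal.mul_mem_right _ _ (Ideal.mul_mem_right _ _ this))
    · rw [Finsupp.single_eq_of_ne' h]
      exact zero_mem _
  · intro f hf p
    show (RBop f) p ∈ W p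
    rw [RBop]
    rcases p with _ | q
    · rw [Finsupp.mapDomain_notin_range]
      · exact zero_mem _
      · simp
    · rw [Finsupp.mapDomain_apply (add_left_injective 1)]
      exact hmono (Nat.le_succ q) (hf q)
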